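/- Let H=(V_H,E_H) be a graph, S_H ⊆ V_H a stable set of H, and f_H : V_H → ℕ, with k ≥ max( max_{v∈V_H} f_H(v), max_{v∈S_H} (f_H(v)+1) ). Assume: (1) H is ([f_H,k],S_H)-critical; (2) every list assignment L_H with colors in {1,…,k} such that |L_H(v)| = f_H(v) for all v ∈ V_H∖S_H and L_H(v) = {c} for all v ∈ S_H (the same single color c for all of S_H) is feasible. Let G=(V,E) be a graph disjoint from H, f : V → ℕ with max_{v∈V} f(v) ≤ k, and v₀ ∈ V with f(v₀) ≤ k−1. Let G' be the graph on V_H ∪ V obtained from the disjoint union of H and G by joining every vertex of S_H to v₀, and define f' by f'(v) = f_H(v)+1 for v ∈ S_H, f'(v₀) = f(v₀)+1, f'(v) = f_H(v) for v ∈ V_H∖S_H, and f'(v) = f(v) for v ∈ V∖{v₀}. Then G' is [f',k]-choosable if and only if G is [f,k]-choosable. -/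

import Mathlib

open SimpleGraph

/-- A list coloring: proper coloring with each vertex colored from its list. -/
def IsListColoring {V : Type*} (G : SimpleGraph V) (L : V → Finset ℕ) (c : V → ℕ) : Prop :=
  (∀ v, c v ∈ L v) ∧ ∀ u v, G.Adj u v → c u ≠ c v

/-- A list assignment is feasible if some list coloring exists. -/
def Feasible {V : Type*} (G : SimpleGraph V) (L : V → Finset ℕ) : Prop :=
  ∃ c, IsListColoring G L c

/-- `[f,k]`-choosability: every list assignment with colors in `{1,…,k}` and
list sizes given by `f` is feasible. -/
def ChoosableF {V : Type*} (G : SimpleGraph V) (f : V → ℕ) (k : ℕ) : Prop :=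
  ∀ L : V → Finset ℕ, (∀ v, L v ⊆ Finset.Icc 1 k) → (∀ v, (L v).card = f v) →
    Feasible G L

/-- `[ℓ,k]`-choosability. -/
def Choosable {V : Type*} (G : SimpleGraph V) (ℓ k : ℕ) : Prop :=
  ChoosableF G (fun _ => ℓ) k

/-- Ideal `[ℓ,k]`-choosability: any color of any vertex's list can be extended
to a full list coloring. -/
def IdeallyChoosable {V : Type*} (G : SimpleGraph V) (ℓ k : ℕ) : Prop :=
  ∀ L : V → Finset ℕ, (∀ v, L v ⊆ Finset.Icc 1 k) → (∀ v, (L v).card = ℓ) →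
    ∀ v₀ : V, ∀ c ∈ L v₀, ∃ col, IsListColoring G L col ∧ col v₀ = c

/-- A block: a maximal (vertex) set inducing a connected subgraph with no cut vertex. -/
def IsBlock {V : Type*} (G : SimpleGraph V) (B : Set V) : Prop :=
  ((G.induce B).Connected ∧ ∀ v ∈ B, (G.induce (B \ {v})).Preconnected) ∧
  ∀ B' : Set V, B ⊆ B' →
    ((G.induce B').Connected ∧ ∀ v ∈ B', (G.induce (B' \ {v})).Preconnected) → B' = B

/-- `H` is `([f,k],S)`-critical: there is an infeasible `f`-list assignment with
colors in `{1,…,k}` whose lists on `S` use at most `k-1` colors in total, but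
increasing the list size of any single vertex of `S` makes `H` `[f,k]`-choosable. -/
def Critical {VH : Type*} [DecidableEq VH] (H : SimpleGraph VH) (f : VH → ℕ)
    (k : ℕ) (S : Set VH) : Prop :=
  (∃ L : VH → Finset ℕ, (∀ v, L v ⊆ Finset.Icc 1 k) ∧ (∀ v, (L v).card = f v) ∧
      (⋃ v ∈ S, (L v : Set ℕ)).ncard ≤ k - 1 ∧ ¬ Feasible H L) ∧
  (∀ u ∈ S, ChoosableF H (Function.update f u (f u + 1)) k)

/-- The graph `G'` built from the disjoint union of `H` and `G` by joining every
vertex of `S ⊆ V(H)` to the vertex `v₀` of `G`. -/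
def joinGr {VH VG : Type*} (H : SimpleGraph VH) (G : SimpleGraph VG)
    (S : Set VH) (v₀ : VG) : SimpleGraph (VH ⊕ VG) where
  Adj x y :=
    match x, y with
    | Sum.inl a, Sum.inl b => H.Adj a b
    | Sum.inl a, Sum.inr b => a ∈ S ∧ b = v₀
    | Sum.inr a, Sum.inl b => b ∈ S ∧ a = v₀
    | Sum.inr a, Sum.inr b => G.Adj a b
  symm := by
    constructor
    rintro (a | a) (b | b) h
    · exact h.symm
    · exact h
    · exact h
    · exact h.symm
  loopless := by
    constructor
    rintro (a | a) h
    · exact H.irrefl h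
    · exact G.irrefl h

/-- The gluing lemma: with `H` `([f_H,k],S)`-critical (`S` stable), and every list
assignment constant (a single color) on `S` and of sizes `f_H` elsewhere feasible,
the graph `G'` obtained by joining every vertex of `S` to `v₀ ∈ V(G)` is
`[f',k]`-choosable iff `G` is `[f,k]`-choosable, where `f'` is `f_H + 1` on `S`,
`f + 1` at `v₀`, and `f_H`, `f` elsewhere. -/
theorem join_choosable_iff {VH VG : Type*} [DecidableEq VH]
    (H : SimpleGraph VH) (G : SimpleGraph VG) (S : Set VH) (fH : VH → ℕ) (k : ℕ)
    (hstable : S.Pairwise fun u v => ¬ H.Adj u v)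
    (hk1 : ∀ v : VH, fH v ≤ k)
    (hk2 : ∀ v ∈ S, fH v + 1 ≤ k)
    (hcrit : Critical H fH k S)
    (hconst : ∀ (L : VH → Finset ℕ) (c : ℕ), (∀ v, L v ⊆ Finset.Icc 1 k) →
        (∀ v ∉ S, (L v).card = fH v) → (∀ v ∈ S, L v = {c}) → Feasible H L)
    (f : VG → ℕ) (v₀ : VG) (hf : ∀ v, f v ≤ k) (hv₀ : f v₀ ≤ k - 1)
    (f' : VH ⊕ VG → ℕ)
    (hf'1 : ∀ v ∈ S, f' (Sum.inl v) = fH v + 1)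
    (hf'2 : ∀ v : VH, v ∉ S → f' (Sum.inl v) = fH v)
    (hf'3 : f' (Sum.inr v₀) = f v₀ + 1)
    (hf'4 : ∀ v : VG, v ≠ v₀ → f' (Sum.inr v) = f v) :
    ChoosableF (joinGr H G S v₀) f' k ↔ ChoosableF G f k := by
  classical
  have adj_ll : ∀ a b : VH, (joinGr H G S v₀).Adj (Sum.inl a) (Sum.inl b) ↔ H.Adj a b :=
    fun a b => Iff.rfl
  have adj_lr : ∀ (a : VH) (b : VG),
      (joinGr H G S v₀).Adj (Sum.inl a) (Sum.inr b) ↔ a ∈ S ∧ b = v₀ := fun a b => Iff.rfl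
  have adj_rl : ∀ (a : VG) (b : VH),
      (joinGr H G S v₀).Adj (Sum.inr a) (Sum.inl b) ↔ b ∈ S ∧ a = v₀ := fun a b => Iff.rfl
  have adj_rr : ∀ a b : VG, (joinGr H G S v₀).Adj (Sum.inr a) (Sum.inr b) ↔ G.Adj a b :=
    fun a b => Iff.rfl
  obtain ⟨⟨LH, hLHsub, hLHcard, hUn, hInf⟩, hcrit2⟩ := hcrit
  constructor
  · -- forward direction
    intro hch L hLsub hLcard
    rcases Set.eq_empty_or_nonempty S with hS | ⟨s₀, hs₀⟩
    · exact absurd (hconst LH 0 hLHsub (fun v _ => hLHcard v)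
        (fun v hv => absurd hv (by simp [hS]))) hInf
    have hk1' : 1 ≤ k := le_trans (by omega) (hk2 s₀ hs₀)
    set U : Set ℕ := ⋃ v ∈ S, (LH v : Set ℕ) with hU
    have hUsub : U ⊆ ↑(Finset.Icc 1 k) := by
      intro x hx
      simp only [hU, Set.mem_iUnion] at hx
      obtain ⟨v, hv, hx⟩ := hx
      exact hLHsub v hx
    have hUfin : U.Finite := Set.Finite.subset (Finset.Icc 1 k).finite_toSet hUsub
    obtain ⟨γ₀, hγ₀Icc, hγ₀U⟩ : ∃ γ₀ ∈ Finset.Icc 1 k, γ₀ ∉ U := by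
      by_contra h
      push_neg at h
      have hsub : (↑(Finset.Icc 1 k) : Set ℕ) ⊆ U := fun x hx => h x hx
      have := Set.ncard_le_ncard hsub hUfin
      rw [Set.ncard_coe_finset, Nat.card_Icc] at this
      omega
    obtain ⟨γ, hγIcc, hγL⟩ : ∃ γ ∈ Finset.Icc 1 k, γ ∉ L v₀ := by
      by_contra h
      push_neg at h
      have hsub : Finset.Icc 1 k ⊆ L v₀ := fun x hx => h x hx
      have := Finset.card_le_card hsub
      rw [Nat.card_Icc, hLcard v₀] at this
      omega
    set σ : Equiv.Perm ℕ := Equiv.swap γ₀ γ with hσ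
    set LH' : VH → Finset ℕ := fun v => (LH v).image σ with hLH'
    have hmem : ∀ (v : VH) (x : ℕ), x ∈ LH' v ↔ σ x ∈ LH v := by
      intro v x
      simp only [hLH', Finset.mem_image]
      constructor
      · rintro ⟨a, ha, rfl⟩
        rwa [hσ, Equiv.swap_apply_self]
      · intro hx
        exact ⟨σ x, hx, by rw [hσ, Equiv.swap_apply_self]⟩
    have hσIcc : ∀ x ∈ Finset.Icc 1 k, σ x ∈ Finset.Icc 1 k := by
      intro x hx
      rcases eq_or_ne x γ₀ with rfl | h1
      · rwa [hσ, Equiv.swap_apply_left]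
      rcases eq_or_ne x γ with rfl | h2
      · rwa [hσ, Equiv.swap_apply_right]
      · rwa [hσ, Equiv.swap_apply_of_ne_of_ne h1 h2]
    have hLH'sub : ∀ v, LH' v ⊆ Finset.Icc 1 k := by
      intro v x hx
      rw [hmem] at hx
      have : σ (σ x) ∈ Finset.Icc 1 k := hσIcc _ (hLHsub v hx)
      rwa [hσ, Equiv.swap_apply_self] at this
    have hLH'card : ∀ v, (LH' v).card = fH v := by
      intro v
      rw [hLH', Finset.card_image_of_injective _ σ.injective, hLHcard]
    have hγLH' : ∀ v ∈ S, γ ∉ LH' v := by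
      intro v hv hmem'
      rw [hmem, hσ, Equiv.swap_apply_right] at hmem'
      exact hγ₀U (Set.mem_iUnion.mpr ⟨v, Set.mem_iUnion.mpr ⟨hv, hmem'⟩⟩)
    have hInf' : ¬ Feasible H LH' := by
      rintro ⟨c, hcmem, hcadj⟩
      exact hInf ⟨fun v => σ (c v), fun v => (hmem v (c v)).mp (hcmem v),
        fun a b hab hc => hcadj a b hab (σ.injective hc)⟩
    set L2 : VH ⊕ VG → Finset ℕ := fun x =>
      match x with
      | Sum.inl v => if v ∈ S then insert γ (LH' v) else LH' v
      | Sum.inr v => if v = v₀ then insert γ (L v₀) else L v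
      with hL2
    have hL2sub : ∀ x, L2 x ⊆ Finset.Icc 1 k := by
      rintro (v | v) x hx
      · simp only [hL2] at hx
        by_cases hv : v ∈ S
        · rw [if_pos hv, Finset.mem_insert] at hx
          rcases hx with rfl | hx
          · exact hγIcc
          · exact hLH'sub v hx
        · rw [if_neg hv] at hx
          exact hLH'sub v hx
      · simp only [hL2] at hx
        by_cases hv : v = v₀
        · rw [if_pos hv, Finset.mem_insert] at hx
          rcases hx with rfl | hx
          · exact hγIcc
          · exact hLsub v₀ hx
        · rw [if_neg hv] at hx
          exact hLsub v hx
    have hL2card : ∀ x, (L2 x).card = f' x := by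
      rintro (v | v)
      · simp only [hL2]
        by_cases hv : v ∈ S
        · rw [if_pos hv, Finset.card_insert_of_notMem (hγLH' v hv), hLH'card, hf'1 v hv]
        · rw [if_neg hv, hLH'card, hf'2 v hv]
      · simp only [hL2]
        by_cases hv : v = v₀
        · subst hv
          rw [if_pos rfl, Finset.card_insert_of_notMem hγL, hLcard, hf'3]
        · rw [if_neg hv, hLcard, hf'4 v hv]
    obtain ⟨c', hc'mem, hc'adj⟩ := hch L2 hL2sub hL2card
    have hex : ∃ u ∈ S, c' (Sum.inl u) = γ := by
      by_contra h
      push_neg at h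
      apply hInf'
      refine ⟨fun v => c' (Sum.inl v), fun v => ?_, fun a b hab => hc'adj _ _ ((adj_ll a b).mpr hab)⟩
      have hmv := hc'mem (Sum.inl v)
      simp only [hL2] at hmv
      by_cases hv : v ∈ S
      · rw [if_pos hv, Finset.mem_insert] at hmv
        rcases hmv with h1 | h1
        · exact absurd h1 (h v hv)
        · exact h1
      · rwa [if_neg hv] at hmv
    obtain ⟨u, huS, huγ⟩ := hex
    refine ⟨fun v => c' (Sum.inr v), fun v => ?_, fun a b hab => hc'adj _ _ ((adj_rr a b).mpr hab)⟩
    have hmv := hc'mem (Sum.inr v)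
    simp only [hL2] at hmv
    by_cases hv : v = v₀
    · subst hv
      rw [if_pos rfl, Finset.mem_insert] at hmv
      rcases hmv with h1 | h1
      · exact absurd h1.symm (by rw [← huγ]; exact (hc'adj _ _ ((adj_lr u v).mpr ⟨huS, rfl⟩)))
      · exact h1
    · rwa [if_neg hv] at hmv
  · -- backward direction
    intro hch L' hL'sub hL'card
    by_cases hcom : ∃ c, ∀ v ∈ S, c ∈ L' (Sum.inl v)
    · obtain ⟨c, hcS⟩ := hcom
      set LHl : VH → Finset ℕ := fun v => if v ∈ S then {c} else L' (Sum.inl v) with hLHl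
      have hfeas : Feasible H LHl := by
        refine hconst LHl c (fun v => ?_) (fun v hv => ?_) (fun v hv => by simp [hLHl, hv])
        · by_cases hv : v ∈ S
          · simp only [hLHl, if_pos hv]
            intro x hx
            rw [Finset.mem_singleton] at hx
            subst hx
            exact hL'sub (Sum.inl v) (hcS v hv)
          · simpa only [hLHl, if_neg hv] using hL'sub (Sum.inl v)
        · simp only [hLHl, if_neg hv]
          rw [hL'card, hf'2 v hv]
      obtain ⟨cH, hcHmem, hcHadj⟩ := hfeas
      have hcHS : ∀ v ∈ S, cH v = c := by
        intro v hv
        have := hcHmem v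
        simpa [hLHl, hv] using this
      have hcard₀ : f v₀ ≤ ((L' (Sum.inr v₀)).erase c).card := by
        have := Finset.pred_card_le_card_erase (s := L' (Sum.inr v₀)) (a := c)
        rw [hL'card, hf'3] at this
        omega
      obtain ⟨t, hts, htcard⟩ := Finset.exists_subset_card_eq hcard₀
      set LGl : VG → Finset ℕ := fun v => if v = v₀ then t else L' (Sum.inr v) with hLGl
      obtain ⟨cG, hcGmem, hcGadj⟩ := hch LGl
        (by
          intro v
          by_cases hv : v = v₀
          · subst hv
            simp only [hLGl, if_pos rfl]
            exact fun x hx => hL'sub (Sum.inr v) (Finset.erase_subset _ _ (hts hx))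
          · simpa only [hLGl, if_neg hv] using hL'sub (Sum.inr v))
        (by
          intro v
          by_cases hv : v = v₀
          · subst hv; simp only [hLGl, if_pos rfl, htcard]
          · simp only [hLGl, if_neg hv]
            rw [hL'card, hf'4 v hv])
      have hcGv₀ : cG v₀ ∈ (L' (Sum.inr v₀)).erase c := by
        have := hcGmem v₀
        simp only [hLGl, if_pos rfl] at this
        exact hts this
      refine ⟨Sum.elim cH cG, fun x => ?_, ?_⟩
      · rcases x with v | v
        · by_cases hv : v ∈ S
          · simpa [hcHS v hv] using hcS v hv
          · have := hcHmem v
            simpa [hLHl, hv] using this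
        · by_cases hv : v = v₀
          · subst hv
            exact Finset.mem_of_mem_erase hcGv₀
          · have := hcGmem v
            simpa [hLGl, hv] using this
      · rintro (a | a) (b | b) hab
        · exact hcHadj a b ((adj_ll a b).mp hab)
        · obtain ⟨haS, rfl⟩ := (adj_lr a b).mp hab
          simp only [Sum.elim_inl, Sum.elim_inr, hcHS a haS]
          exact fun h => (Finset.ne_of_mem_erase hcGv₀) h.symm
        · obtain ⟨hbS, rfl⟩ := (adj_rl a b).mp hab
          simp only [Sum.elim_inl, Sum.elim_inr, hcHS b hbS]
          exact fun h => (Finset.ne_of_mem_erase hcGv₀) h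
        · exact hcGadj a b ((adj_rr a b).mp hab)
    · push_neg at hcom
      have hcard₀ : f v₀ ≤ (L' (Sum.inr v₀)).card := by rw [hL'card, hf'3]; omega
      obtain ⟨t, hts, htcard⟩ := Finset.exists_subset_card_eq hcard₀
      set LGl : VG → Finset ℕ := fun v => if v = v₀ then t else L' (Sum.inr v) with hLGl
      obtain ⟨cG, hcGmem, hcGadj⟩ := hch LGl
        (by
          intro v
          by_cases hv : v = v₀
          · subst hv
            simp only [hLGl, if_pos rfl]
            exact fun x hx => hL'sub (Sum.inr v) (hts hx)
          · simpa only [hLGl, if_neg hv] using hL'sub (Sum.inr v))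
        (by
          intro v
          by_cases hv : v = v₀
          · subst hv; simp only [hLGl, if_pos rfl, htcard]
          · simp only [hLGl, if_neg hv]
            rw [hL'card, hf'4 v hv])
      set c : ℕ := cG v₀ with hc
      obtain ⟨u, huS, huc⟩ := hcom c
      have hM : ∀ v : VH, ∃ M : Finset ℕ, M ⊆ L' (Sum.inl v) ∧
          M.card = Function.update fH u (fH u + 1) v ∧ (v ∈ S → c ∉ M) := by
        intro v
        by_cases hvu : v = u
        · subst hvu
          refine ⟨L' (Sum.inl v), subset_rfl, ?_, fun _ => huc⟩
          rw [Function.update_self, hL'card, hf'1 v huS]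
        · by_cases hvS : v ∈ S
          · have hcard : fH v ≤ ((L' (Sum.inl v)).erase c).card := by
              have := Finset.pred_card_le_card_erase (s := L' (Sum.inl v)) (a := c)
              rw [hL'card, hf'1 v hvS] at this
              omega
            obtain ⟨M, hM1, hM2⟩ := Finset.exists_subset_card_eq hcard
            refine ⟨M, fun x hx => Finset.mem_of_mem_erase (hM1 hx), ?_,
              fun _ hcM => Finset.notMem_erase c _ (hM1 hcM)⟩
            rw [Function.update_of_ne hvu, hM2]
          · refine ⟨L' (Sum.inl v), subset_rfl, ?_, fun h => absurd h hvS⟩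
            rw [Function.update_of_ne hvu, hL'card, hf'2 v hvS]
      choose M hM1 hM2 hM3 using hM
      obtain ⟨cH, hcHmem, hcHadj⟩ := hcrit2 u huS M
        (fun v x hx => hL'sub (Sum.inl v) (hM1 v hx)) hM2
      have hcHS : ∀ v ∈ S, cH v ≠ c := fun v hv h => hM3 v hv (h ▸ hcHmem v)
      refine ⟨Sum.elim cH cG, fun x => ?_, ?_⟩
      · rcases x with v | v
        · exact hM1 v (hcHmem v)
        · by_cases hv : v = v₀
          · subst hv
            have := hcGmem v
            simp only [hLGl, if_pos rfl] at this
            exact hts this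
          · have := hcGmem v
            simpa [hLGl, hv] using this
      · rintro (a | a) (b | b) hab
        · exact hcHadj a b ((adj_ll a b).mp hab)
        · obtain ⟨haS, rfl⟩ := (adj_lr a b).mp hab
          exact hcHS a haS
        · obtain ⟨hbS, rfl⟩ := (adj_rl a b).mp hab
          exact fun h => hcHS b hbS h.symm
        · exact hcGadj a b ((adj_rr a b).mp hab)
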